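/- Under the assumptions guaranteeing the implied vol I(y) is well defined (unique positive solution of c_b(y, I(y)) = E[c_b(y + η(G-1), √G)]), if η = 0 then I is an even function of y; conversely, if I is even then the ATM skew I'(0) = -√(π/2)·E[erf((η/√2)·(1-G)/√G)] vanishes, which occurs only if η = 0. -/

import Mathlib

open MeasureTheory ProbabilityTheory Real

noncomputable def normalPdf (x : ℝ) : ℝ := (Real.sqrt (2 * Real.pi))⁻¹ * Real.exp (-(x ^ 2) / 2)

noncomputable def normalCdf (x : ℝ) : ℝ := ∫ t in Set.Iic x, normalPdf t

noncomputable def cb (y σ : ℝ) : ℝ := -y * normalCdf (-y / σ) + σ * normalPdf (-y / σ)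

open Set Filter

lemma normalPdf_pos (x : ℝ) : 0 < normalPdf x := by
  unfold normalPdf
  positivity

lemma normalPdf_even (x : ℝ) : normalPdf (-x) = normalPdf x := by
  unfold normalPdf; ring_nf

lemma continuous_normalPdf : Continuous normalPdf := by
  unfold normalPdf; fun_prop

lemma integrable_normalPdf : Integrable normalPdf := by
  have h := integrable_exp_neg_mul_sq (by norm_num : (0:ℝ) < 1/2)
  have : normalPdf = fun x => (Real.sqrt (2 * Real.pi))⁻¹ * Real.exp (-(1/2) * x ^ 2) := by
    funext x; unfold normalPdf; ring_nf
  rw [this]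
  exact h.const_mul _

lemma integral_normalPdf : ∫ x, normalPdf x = 1 := by
  have h := integral_gaussian (1/2 : ℝ)
  have h2 : ∫ x, normalPdf x = (Real.sqrt (2 * Real.pi))⁻¹ * ∫ x : ℝ, Real.exp (-(1/2) * x ^ 2) := by
    rw [← integral_const_mul]
    congr 1; funext x; unfold normalPdf; ring_nf
  rw [h2, h]
  rw [show π / (1/2 : ℝ) = 2 * π by ring]
  rw [inv_mul_cancel₀]
  positivity

lemma normalCdf_sub (a x : ℝ) : normalCdf x - normalCdf a = ∫ t in a..x, normalPdf t :=
  intervalIntegral.integral_Iic_sub_Iic (μ := volume)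
    integrable_normalPdf.integrableOn integrable_normalPdf.integrableOn

lemma hasDerivAt_normalCdf (x : ℝ) : HasDerivAt normalCdf (normalPdf x) x := by
  have h : HasDerivAt (fun u => ∫ t in (0:ℝ)..u, normalPdf t) (normalPdf x) x :=
    intervalIntegral.integral_hasDerivAt_right
      integrable_normalPdf.intervalIntegrable
      continuous_normalPdf.aestronglyMeasurable.stronglyMeasurableAtFilter
      continuous_normalPdf.continuousAt
  have e : normalCdf = fun u => normalCdf 0 + ∫ t in (0:ℝ)..u, normalPdf t := by
    funext u; rw [← normalCdf_sub]; ring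
  rw [e]
  exact h.const_add _

lemma continuous_normalCdf : Continuous normalCdf :=
  continuous_iff_continuousAt.2 fun x => (hasDerivAt_normalCdf x).continuousAt

lemma normalCdf_mono : Monotone normalCdf := by
  intro a b hab
  have h : normalCdf b - normalCdf a = ∫ t in a..b, normalPdf t := normalCdf_sub a b
  have h2 : 0 ≤ ∫ t in a..b, normalPdf t :=
    intervalIntegral.integral_nonneg hab (fun t _ => (normalPdf_pos t).le)
  linarith

lemma normalCdf_pos (x : ℝ) : 0 < normalCdf x := by
  have h : normalCdf x - normalCdf (x-1) = ∫ t in (x-1)..x, normalPdf t := normalCdf_sub _ _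
  have h2 : 0 < ∫ t in (x-1)..x, normalPdf t :=
    intervalIntegral.intervalIntegral_pos_of_pos
      integrable_normalPdf.intervalIntegrable (fun t => normalPdf_pos t) (by linarith)
  have h3 : 0 ≤ normalCdf (x-1) :=
    setIntegral_nonneg measurableSet_Iic (fun t _ => (normalPdf_pos t).le)
  linarith

lemma normalCdf_add_neg (x : ℝ) : normalCdf x + normalCdf (-x) = 1 := by
  have h1 : normalCdf (-x) = ∫ t in Set.Ioi x, normalPdf t := by
    unfold normalCdf
    have h := integral_comp_neg_Iic (-x) normalPdf
    simp only [normalPdf_even, neg_neg] at h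
    exact h
  rw [h1]
  unfold normalCdf
  rw [← integral_normalPdf]
  exact intervalIntegral.integral_Iic_add_Ioi (μ := volume)
    integrable_normalPdf.integrableOn integrable_normalPdf.integrableOn

lemma normalCdf_lt_one (x : ℝ) : normalCdf x < 1 := by
  have := normalCdf_add_neg x
  have := normalCdf_pos (-x)
  linarith

lemma hasDerivAt_normalPdf (x : ℝ) : HasDerivAt normalPdf (-x * normalPdf x) x := by
  have h1 : HasDerivAt (fun x : ℝ => -(x ^ 2) / 2) (-x) x := by
    have := ((hasDerivAt_pow 2 x).neg).div_const 2
    simpa using this.congr_deriv (by ring)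
  have h2 : HasDerivAt (fun x : ℝ => Real.exp (-(x ^ 2) / 2)) (Real.exp (-(x^2)/2) * (-x)) x :=
    (Real.hasDerivAt_exp _).comp x h1
  have h3 := h2.const_mul (Real.sqrt (2 * Real.pi))⁻¹
  unfold normalPdf
  refine h3.congr_deriv ?_
  ring

lemma cb_neg (y σ : ℝ) : cb (-y) σ = y + cb y σ := by
  unfold cb
  have h1 : normalCdf (-(-y) / σ) = 1 - normalCdf (-y/σ) := by
    have := normalCdf_add_neg (-(-y)/σ)
    have e : -(-(-y)/σ) = -y/σ := by ring
    rw [e] at this; linarith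
  have h2 : normalPdf (-(-y)/σ) = normalPdf (-y/σ) := by
    have e : (-(-y)/σ) = -(-y/σ) := by ring
    rw [e, normalPdf_even]
  rw [h1, h2]; ring

-- derivative of σ ↦ cb y σ, for σ ≠ 0
lemma hasDerivAt_cb_sigma (y : ℝ) {σ : ℝ} (hσ : σ ≠ 0) :
    HasDerivAt (fun s => cb y s) (normalPdf (-y / σ)) σ := by
  have hinner : HasDerivAt (fun s : ℝ => -y / s) (y / σ ^ 2) σ := by
    have := (hasDerivAt_inv hσ).const_mul (-y)
    simpa [div_eq_mul_inv] using this.congr_deriv (by field_simp)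
  have hΦ : HasDerivAt (fun s : ℝ => normalCdf (-y / s)) (normalPdf (-y/σ) * (y / σ^2)) σ :=
    (hasDerivAt_normalCdf _).comp σ hinner
  have hφ : HasDerivAt (fun s : ℝ => normalPdf (-y / s))
      ((-(-y/σ) * normalPdf (-y/σ)) * (y / σ^2)) σ :=
    (hasDerivAt_normalPdf _).comp σ hinner
  have h1 := hΦ.const_mul (-y)
  have h2 := (hasDerivAt_id σ).mul hφ
  have h := h1.add h2
  unfold cb
  refine h.congr_deriv ?_
  simp only [id]
  field_simp
  ring

lemma cb_strictMonoOn (y : ℝ) : StrictMonoOn (fun s => cb y s) (Set.Ioi 0) := by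
  apply strictMonoOn_of_deriv_pos (convex_Ioi 0)
  · intro s hs
    exact ((hasDerivAt_cb_sigma y (ne_of_gt hs)).continuousAt).continuousWithinAt
  · intro s hs
    rw [interior_Ioi] at hs
    rw [(hasDerivAt_cb_sigma y (ne_of_gt hs)).deriv]
    exact normalPdf_pos _

-- derivative of y ↦ cb y σ, σ ≠ 0
lemma hasDerivAt_cb_y (σ : ℝ) (hσ : σ ≠ 0) (u : ℝ) :
    HasDerivAt (fun v => cb v σ) (-normalCdf (-u / σ)) u := by
  have hinner : HasDerivAt (fun v : ℝ => -v / σ) (-1/σ) u := by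
    simpa using ((hasDerivAt_id u).neg.div_const σ)
  have hΦ : HasDerivAt (fun v : ℝ => normalCdf (-v / σ)) (normalPdf (-u/σ) * (-1/σ)) u :=
    (hasDerivAt_normalCdf _).comp u hinner
  have hφ : HasDerivAt (fun v : ℝ => normalPdf (-v / σ))
      ((-(-u/σ) * normalPdf (-u/σ)) * (-1/σ)) u :=
    (hasDerivAt_normalPdf _).comp u hinner
  have h1 := ((hasDerivAt_id u).neg.mul hΦ)
  have h2 := hφ.const_mul σ
  have h := h1.add h2
  unfold cb
  refine h.congr_deriv ?_
  simp only [Pi.neg_apply, id]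
  field_simp
  ring

-- MVT: for a < b, σ > 0, cb a σ - cb b σ = (b - a) * Φ(-c/σ) for some c ∈ (a,b)
lemma cb_sub_cb {σ : ℝ} (hσ : 0 < σ) {a b : ℝ} (hab : a < b) :
    ∃ c ∈ Set.Ioo a b, cb a σ - cb b σ = (b - a) * normalCdf (-c / σ) := by
  obtain ⟨c, hc, hc2⟩ := exists_hasDerivAt_eq_slope (fun v => cb v σ)
    (fun u => -normalCdf (-u / σ)) hab
    (fun u _ => (hasDerivAt_cb_y σ (ne_of_gt hσ) u).continuousAt.continuousWithinAt)
    (fun u _ => hasDerivAt_cb_y σ (ne_of_gt hσ) u)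
  refine ⟨c, hc, ?_⟩
  have hba : b - a ≠ 0 := by linarith
  field_simp at hc2
  rw [neg_div]
  nlinarith [hc2]

lemma cb_antitone {σ : ℝ} (hσ : 0 < σ) {a b : ℝ} (hab : a ≤ b) : cb b σ ≤ cb a σ := by
  rcases eq_or_lt_of_le hab with rfl | h
  · exact le_refl _
  obtain ⟨c, _, hc⟩ := cb_sub_cb hσ h
  nlinarith [normalCdf_pos (-c/σ)]

-- tail bounds
lemma normalPdf_anti {s t : ℝ} (h : |t| ≤ s) : normalPdf s ≤ normalPdf t := by
  unfold normalPdf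
  have h2 : -(s^2)/2 ≤ -(t^2)/2 := by nlinarith [abs_nonneg t, sq_abs t, abs_le.1 h]
  have := Real.exp_le_exp.2 h2
  have hK : (0:ℝ) < (Real.sqrt (2 * Real.pi))⁻¹ := by positivity
  nlinarith

lemma integrable_neg_mul_normalPdf : Integrable (fun t : ℝ => -t * normalPdf t) := by
  have h := integrable_mul_exp_neg_mul_sq (by norm_num : (0:ℝ) < 1/2)
  have : (fun t : ℝ => -t * normalPdf t)
      = fun t => (-(Real.sqrt (2 * Real.pi))⁻¹) * (t * Real.exp (-(1/2) * t^2)) := by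
    funext t; unfold normalPdf; ring_nf
  rw [this]
  exact h.const_mul _

lemma tendsto_normalPdf_atBot : Tendsto normalPdf atBot (nhds 0) := by
  unfold normalPdf
  rw [show (0:ℝ) = (Real.sqrt (2 * Real.pi))⁻¹ * 0 by ring]
  apply Tendsto.const_mul
  apply Real.tendsto_exp_atBot.comp
  have : Tendsto (fun x : ℝ => -(x^2)/2) atBot atBot := by
    apply tendsto_atBot_mono (fun x : ℝ => (by nlinarith [sq_nonneg (x+1)] : -(x^2)/2 ≤ x + 1/2))
    exact tendsto_atBot_add_const_right _ _ tendsto_id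
  exact this

lemma integral_neg_mul_normalPdf (c : ℝ) :
    ∫ t in Set.Iic c, -t * normalPdf t = normalPdf c := by
  have h := integral_Iic_of_hasDerivAt_of_tendsto (f := normalPdf)
    (f' := fun t => -t * normalPdf t) (a := c) (m := 0)
    (continuous_normalPdf.continuousAt.continuousWithinAt)
    (fun x _ => hasDerivAt_normalPdf x)
    integrable_neg_mul_normalPdf.integrableOn
    tendsto_normalPdf_atBot
  simpa using h

lemma normalCdf_neg_le {x : ℝ} (hx : 0 < x) : normalCdf (-x) ≤ normalPdf x / x := by
  have h1 : normalCdf (-x) ≤ ∫ t in Set.Iic (-x), (-t/x) * normalPdf t := by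
    unfold normalCdf
    apply setIntegral_mono_on integrable_normalPdf.integrableOn
      ((integrable_neg_mul_normalPdf.div_const x).congr (by
        filter_upwards with t; ring)).integrableOn
      measurableSet_Iic
    intro t ht
    simp only [Set.mem_Iic] at ht
    have h2 : 1 ≤ -t/x := by
      rw [le_div_iff₀ hx]; linarith
    nlinarith [normalPdf_pos t]
  have h2 : ∫ t in Set.Iic (-x), (-t/x) * normalPdf t
      = (∫ t in Set.Iic (-x), -t * normalPdf t) / x := by
    rw [← integral_div]
    congr 1; funext t; ring
  rw [h2, integral_neg_mul_normalPdf, normalPdf_even] at h1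
  exact h1

lemma Dlow_S {η g y g₀ g₁ : ℝ} (hη : 0 < η) (h1 : g₀ ≤ g) (h2 : g ≤ g₁)
    (hg₀1 : 1 < g₀) (hy : 0 < y) :
    2*η*(g₀-1) * normalCdf (-((y + η*(g₁-1)) / Real.sqrt g₀)) ≤
      cb (y - η*(g-1)) (Real.sqrt g) - cb (y + η*(g-1)) (Real.sqrt g) := by
  have hg : 0 < g := by linarith
  have hσ : 0 < Real.sqrt g := Real.sqrt_pos.2 hg
  have hsg₀' : 0 < Real.sqrt g₀ := Real.sqrt_pos.2 (by linarith)
  have hz : 0 < η * (g - 1) := by nlinarith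
  obtain ⟨c, hc, hcb⟩ := cb_sub_cb hσ (show y - η * (g - 1) < y + η * (g - 1) by linarith)
  rw [show cb (y - η*(g-1)) (Real.sqrt g) - cb (y + η*(g-1)) (Real.sqrt g)
      = (y + η*(g-1) - (y - η*(g-1))) * normalCdf (-c / Real.sqrt g) from hcb]
  have hcle : c ≤ y + η*(g₁-1) := by
    have h3 : c ≤ y + η * (g - 1) := hc.2.le
    nlinarith
  have harg : -((y + η*(g₁-1)) / Real.sqrt g₀) ≤ -c / Real.sqrt g := by
    rw [neg_div, neg_le_neg_iff]
    have h1' : Real.sqrt g₀ ≤ Real.sqrt g := Real.sqrt_le_sqrt h1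
    exact div_le_div₀ (by nlinarith) hcle hsg₀' h1'
  have hΦ := normalCdf_mono harg
  have hΦ0 : 0 ≤ normalCdf (-((y + η*(g₁-1)) / Real.sqrt g₀)) := (normalCdf_pos _).le
  have e1 : 2*η*(g₀-1) ≤ 2*η*(g-1) := by nlinarith
  have e2 : 2*η*(g₀-1) * normalCdf (-((y + η*(g₁-1)) / Real.sqrt g₀))
      ≤ 2*η*(g-1) * normalCdf (-c / Real.sqrt g) :=
    mul_le_mul e1 hΦ hΦ0 (by nlinarith)
  nlinarith [e2]

lemma Dlow_neg {η g y : ℝ} (hη : 0 < η) (hg : 0 < g) (hy : η + 1 ≤ y) :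
    -(2*η * normalCdf (-(y-η))) ≤
      cb (y - η*(g-1)) (Real.sqrt g) - cb (y + η*(g-1)) (Real.sqrt g) := by
  have hσ : 0 < Real.sqrt g := Real.sqrt_pos.2 hg
  have hΦw0 : 0 ≤ normalCdf (-(y - η)) := (normalCdf_pos _).le
  rcases lt_trichotomy g 1 with hlt | heq1 | hgt
  · have hz : η * (g - 1) < 0 := by nlinarith
    have hz2 : -η < η * (g - 1) := by nlinarith
    obtain ⟨c, hc, hcb⟩ := cb_sub_cb hσ (show y + η * (g - 1) < y - η * (g - 1) by linarith)
    rw [show cb (y - η*(g-1)) (Real.sqrt g) - cb (y + η*(g-1)) (Real.sqrt g)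
        = -((y - η*(g-1) - (y + η*(g-1))) * normalCdf (-c / Real.sqrt g)) by rw [← hcb]; ring]
    have hc1 : y - η ≤ c := by nlinarith [hc.1]
    have hσ1 : Real.sqrt g ≤ 1 := by
      rw [show (1:ℝ) = Real.sqrt 1 by simp]
      exact Real.sqrt_le_sqrt hlt.le
    have harg : -c / Real.sqrt g ≤ -(y - η) := by
      rw [neg_div, neg_le_neg_iff]
      have hc0 : 0 ≤ c := by linarith
      calc (y - η) ≤ c := hc1
        _ ≤ c / Real.sqrt g := by
            rw [le_div_iff₀ hσ]; nlinarith
    have hΦ := normalCdf_mono harg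
    have hΦc0 : 0 ≤ normalCdf (-c / Real.sqrt g) := (normalCdf_pos _).le
    nlinarith
  · subst heq1
    simp only [sub_self, mul_zero, sub_zero, add_zero]
    nlinarith
  · have hz : 0 < η * (g - 1) := by nlinarith
    obtain ⟨c, hc, hcb⟩ := cb_sub_cb hσ (show y - η * (g - 1) < y + η * (g - 1) by linarith)
    rw [show cb (y - η*(g-1)) (Real.sqrt g) - cb (y + η*(g-1)) (Real.sqrt g)
        = (y + η*(g-1) - (y - η*(g-1))) * normalCdf (-c / Real.sqrt g) from hcb]
    nlinarith [normalCdf_pos (-c / Real.sqrt g)]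

lemma normalCdf_neg_ge {x : ℝ} (hx : 0 ≤ x) : normalPdf (x+1) ≤ normalCdf (-x) := by
  have h := normalCdf_sub (-x-1) (-x)
  have h2 : normalPdf (x+1) * 1 ≤ ∫ t in (-x-1)..(-x), normalPdf t := by
    have := intervalIntegral.integral_mono_on (a := -x-1) (b := -x) (by linarith)
      (intervalIntegrable_const (c := normalPdf (x+1)))
      integrable_normalPdf.intervalIntegrable
      (fun t ht => by
        apply normalPdf_anti
        rw [abs_le]; constructor <;> [linarith [ht.1]; linarith [ht.2, hx]])
    simpa using this
  have h3 : 0 ≤ normalCdf (-x-1) := (normalCdf_pos _).le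
  linarith [h2, h.ge, h.le]

lemma tendsto_quad_atBot {a b c : ℝ} (ha : 0 < a) :
    Tendsto (fun y : ℝ => -a*y^2 + b*y + c) atTop atBot := by
  have hbound : ∀ᶠ y in atTop, -a*y^2 + b*y + c ≤ -y + c := by
    filter_upwards [eventually_ge_atTop ((b+1)/a), eventually_ge_atTop (0:ℝ)] with y h1 h2
    have h3 : b + 1 ≤ a * y := by rw [div_le_iff₀ ha] at h1; linarith
    nlinarith [mul_le_mul_of_nonneg_right h3 h2]
  have hg : Tendsto (fun y : ℝ => -y + c) atTop atBot :=
    tendsto_atBot_add_const_right _ c tendsto_neg_atTop_atBot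
  exact tendsto_atBot_mono' atTop hbound hg

set_option maxHeartbeats 1000000 in
theorem key {Ω : Type*} [MeasurableSpace Ω] (μ : Measure Ω)
    [IsProbabilityMeasure μ] (G : Ω → ℝ) (η : ℝ) (hη : 0 < η)
    (hGm : Measurable G)
    (hpos : ∀ᵐ ω ∂μ, 0 < G ω) (hG : Integrable G μ)
    (hmean : ∫ ω, G ω ∂μ = 1)
    (hnondeg : ¬ (∀ᵐ ω ∂μ, G ω = 1))
    (hint : ∀ y : ℝ, Integrable (fun ω => cb (y + η * (G ω - 1)) (Real.sqrt (G ω))) μ)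
    (hintm : ∀ y : ℝ, Integrable (fun ω => cb (y - η * (G ω - 1)) (Real.sqrt (G ω))) μ)
    (heq : ∀ y : ℝ, (∫ ω, cb (y - η * (G ω - 1)) (Real.sqrt (G ω)) ∂μ)
      = ∫ ω, cb (y + η * (G ω - 1)) (Real.sqrt (G ω)) ∂μ) : False := by
  -- Step 1 : μ {1 < G} > 0
  have hP : 0 < μ {ω | 1 < G ω} := by
    rcases (eq_zero_or_pos (μ {ω | 1 < G ω})) with h0 | h
    · exfalso
      apply hnondeg
      have hle : ∀ᵐ ω ∂μ, G ω ≤ 1 := by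
        rw [ae_iff]
        convert h0 using 2
        ext ω; simp
      have hint1 : Integrable (fun ω => 1 - G ω) μ := (integrable_const 1).sub hG
      have hz : ∫ ω, (1 - G ω) ∂μ = 0 := by
        rw [integral_sub (integrable_const 1) hG, hmean]
        simp
      have := (integral_eq_zero_iff_of_nonneg_ae
        (hle.mono fun ω h => by simp [sub_nonneg, h]) hint1).mp hz
      filter_upwards [this] with ω h
      have h2 : (1 : ℝ) - G ω = 0 := h
      linarith
    · exact h
  -- Step 2 : ∃ g₀ > 1, μ {g₀ ≤ G} > 0
  obtain ⟨g₀, hg₀1, hPg₀⟩ : ∃ g₀, 1 < g₀ ∧ 0 < μ {ω | g₀ ≤ G ω} := by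
    by_contra hcon
    push_neg at hcon
    have hnull : ∀ n : ℕ, μ {ω | 1 + 1/(n+1 : ℝ) ≤ G ω} = 0 := fun n =>
      le_antisymm (hcon _ (by nlinarith [one_div_pos.mpr (show (0:ℝ) < (n:ℝ)+1 by positivity)])) zero_le
    have hsub : {ω | 1 < G ω} ⊆ ⋃ n : ℕ, {ω | 1 + 1/(n+1 : ℝ) ≤ G ω} := by
      intro ω hω
      obtain ⟨n, hn⟩ := exists_nat_one_div_lt (K := ℝ) (sub_pos.2 hω)
      exact Set.mem_iUnion.2 ⟨n, by simp only [Set.mem_setOf_eq]; linarith [hn]⟩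
    have hle2 : μ {ω | 1 < G ω} ≤ ∑' n : ℕ, μ {ω | 1 + 1/(n+1 : ℝ) ≤ G ω} :=
      (measure_mono hsub).trans (measure_iUnion_le _)
    rw [show ∑' n : ℕ, μ {ω | 1 + 1/(n+1 : ℝ) ≤ G ω} = 0 by rw [ENNReal.tsum_eq_zero]; intro n; simpa [one_div] using hnull n] at hle2
    exact absurd (le_antisymm hle2 zero_le) hP.ne'
  -- Step 3 : ∃ g₁ ≥ g₀, μ S > 0 with S = {g₀ ≤ G ≤ g₁}
  obtain ⟨g₁, hg₁, hPS⟩ : ∃ g₁, g₀ ≤ g₁ ∧ 0 < μ {ω | g₀ ≤ G ω ∧ G ω ≤ g₁} := by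
    by_contra hcon
    push_neg at hcon
    have hnull : ∀ n : ℕ, μ {ω | g₀ ≤ G ω ∧ G ω ≤ g₀ + n} = 0 := fun n =>
      le_antisymm (hcon (g₀ + n) (by linarith [Nat.cast_nonneg (α := ℝ) n])) zero_le
    have hsub : {ω | g₀ ≤ G ω} ⊆ ⋃ n : ℕ, {ω | g₀ ≤ G ω ∧ G ω ≤ g₀ + n} := by
      intro ω hω
      obtain ⟨n, hn⟩ := exists_nat_ge (G ω - g₀)
      exact Set.mem_iUnion.2 ⟨n, ⟨hω, by linarith⟩⟩
    have hle2 : μ {ω | g₀ ≤ G ω} ≤ ∑' n : ℕ, μ {ω | g₀ ≤ G ω ∧ G ω ≤ g₀ + n} :=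
      (measure_mono hsub).trans (measure_iUnion_le _)
    rw [show ∑' n : ℕ, μ {ω | g₀ ≤ G ω ∧ G ω ≤ g₀ + n} = 0 by rw [ENNReal.tsum_eq_zero]; intro n; simpa using hnull n] at hle2
    exact absurd (le_antisymm hle2 zero_le) hPg₀.ne'
  set S : Set Ω := {ω | g₀ ≤ G ω ∧ G ω ≤ g₁} with hS
  have hSmeas : MeasurableSet S := (hGm measurableSet_Ici).inter (hGm measurableSet_Iic)
  set C : ℝ := η * (g₁ - 1) with hC
  have hC0 : 0 ≤ C := by
    apply mul_nonneg hη.le; linarith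
  set A : ℝ := 2 * η * (g₀ - 1) * (μ S).toReal with hA
  have hApos : 0 < A := by
    apply mul_pos (by nlinarith)
    exact ENNReal.toReal_pos hPS.ne' (measure_ne_top μ S)
  set B : ℝ := 2 * η with hB
  have hBpos : 0 < B := by positivity
  have hsg₀ : (1:ℝ) < Real.sqrt g₀ := by
    rw [show (1:ℝ) = Real.sqrt 1 by simp]
    exact Real.sqrt_lt_sqrt (by norm_num) hg₀1
  have hsg₀' : (0:ℝ) < Real.sqrt g₀ := by linarith
  -- Step 4 : main inequality for all y ≥ η + 1
  have main : ∀ y : ℝ, η + 1 ≤ y →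
      A * normalCdf (-((y + C) / Real.sqrt g₀)) ≤ B * normalCdf (-(y - η)) := by
    intro y hy
    have hy0 : 0 < y := by linarith
    have hyη : 1 ≤ y - η := by linarith
    have hDint : Integrable (fun ω => cb (y - η * (G ω - 1)) (Real.sqrt (G ω))
        - cb (y + η * (G ω - 1)) (Real.sqrt (G ω))) μ := (hintm y).sub (hint y)
    have hD0 : ∫ ω, (cb (y - η * (G ω - 1)) (Real.sqrt (G ω))
        - cb (y + η * (G ω - 1)) (Real.sqrt (G ω))) ∂μ = 0 := by
      rw [integral_sub (hintm y) (hint y), heq y, sub_self]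
    have hsplit : (∫ ω in S, (cb (y - η * (G ω - 1)) (Real.sqrt (G ω))
          - cb (y + η * (G ω - 1)) (Real.sqrt (G ω))) ∂μ)
        + (∫ ω in Sᶜ, (cb (y - η * (G ω - 1)) (Real.sqrt (G ω))
          - cb (y + η * (G ω - 1)) (Real.sqrt (G ω))) ∂μ) = 0 := by
      rw [integral_add_compl hSmeas hDint, hD0]
    have hlbS : (2 * η * (g₀ - 1) * normalCdf (-((y + C) / Real.sqrt g₀))) * (μ S).toReal
        ≤ ∫ ω in S, (cb (y - η * (G ω - 1)) (Real.sqrt (G ω))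
          - cb (y + η * (G ω - 1)) (Real.sqrt (G ω))) ∂μ := by
      apply setIntegral_ge_of_const_le_real hSmeas (measure_ne_top μ S) _ hDint.integrableOn
      intro ω hω
      rw [hC]
      exact Dlow_S hη hω.1 hω.2 hg₀1 hy0
    have hlbSc : -(B * normalCdf (-(y - η)))
        ≤ ∫ ω in Sᶜ, (cb (y - η * (G ω - 1)) (Real.sqrt (G ω))
          - cb (y + η * (G ω - 1)) (Real.sqrt (G ω))) ∂μ := by
      have hptwise : ∀ᵐ ω ∂(μ.restrict Sᶜ), -(B * normalCdf (-(y - η)))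
          ≤ cb (y - η * (G ω - 1)) (Real.sqrt (G ω))
            - cb (y + η * (G ω - 1)) (Real.sqrt (G ω)) := by
        apply ae_restrict_of_ae
        filter_upwards [hpos] with ω hg
        rw [hB]
        exact Dlow_neg hη hg hy
      have hmono := integral_mono_ae (μ := μ.restrict Sᶜ)
        (integrable_const (-(B * normalCdf (-(y - η))))) hDint.restrict hptwise
      rw [integral_const] at hmono
      refine le_trans ?_ hmono
      have hμ1 : ((μ.restrict Sᶜ) Set.univ).toReal ≤ 1 := by
        rw [Measure.restrict_apply_univ]
        simpa using ENNReal.toReal_mono ENNReal.one_ne_top (prob_le_one : μ Sᶜ ≤ 1)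
      have hμ0 : 0 ≤ ((μ.restrict Sᶜ) Set.univ).toReal := ENNReal.toReal_nonneg
      have hκ : 0 ≤ B * normalCdf (-(y - η)) := mul_nonneg hBpos.le (normalCdf_pos (-(y - η))).le
      rw [smul_eq_mul, measureReal_def]
      nlinarith
    have hAeq : A * normalCdf (-((y + C) / Real.sqrt g₀))
        = (2 * η * (g₀ - 1) * normalCdf (-((y + C) / Real.sqrt g₀))) * (μ S).toReal := by
      rw [hA]; ring
    linarith [hsplit, hlbS, hlbSc, hAeq.le, hAeq.ge]
  -- Step 5 : contradiction via tail asymptotics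
  set r : ℝ := (Real.sqrt g₀)⁻¹ with hr
  have hr0 : 0 < r := by positivity
  have hr1 : r < 1 := by
    rw [hr, inv_lt_one_iff₀]; right; exact hsg₀
  set d : ℝ := r * C + 1 with hd
  set a : ℝ := (1 - r^2)/2 with ha
  have ha0 : 0 < a := by rw [ha]; nlinarith
  have hq : Tendsto (fun y : ℝ => B * Real.exp (-a*y^2 + (r*d+η)*y + (d^2-η^2)/2)) atTop (nhds 0) := by
    rw [show (0:ℝ) = B * 0 by ring]
    exact (Real.tendsto_exp_atBot.comp (tendsto_quad_atBot ha0)).const_mul B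
  have hev := (hq.eventually_lt_const hApos).and (eventually_ge_atTop (η + 1))
  obtain ⟨y, hylt, hy⟩ := hev.exists
  have h4 := main y hy
  -- chain of inequalities
  set w : ℝ := y - η with hw
  set v : ℝ := (y + C) / Real.sqrt g₀ with hv
  have hw1 : 1 ≤ w := by rw [hw]; linarith
  have hv0 : 0 ≤ v := by
    rw [hv]; exact div_nonneg (by linarith) hsg₀'.le
  have hK : 0 < (Real.sqrt (2 * Real.pi))⁻¹ := by positivity
  -- B * Φ(-w) ≤ B * pdf w / w ≤ B * pdf w
  have t1 : B * normalCdf (-w) ≤ B * normalPdf w := by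
    have := normalCdf_neg_le (show 0 < w by linarith)
    have h5 : normalPdf w / w ≤ normalPdf w := by
      rw [div_le_iff₀ (by linarith)]
      nlinarith [normalPdf_pos w, (normalPdf_pos w).le]
    nlinarith [hBpos.le]
  -- A * pdf (v+1) ≤ A * Φ(-v)
  have t2 : A * normalPdf (v+1) ≤ A * normalCdf (-v) := by
    nlinarith [normalCdf_neg_ge hv0, hApos.le]
  -- B * pdf w < A * pdf (v+1)
  have t3 : B * normalPdf w < A * normalPdf (v+1) := by
    have hveq : v + 1 = r * y + d := by
      rw [hv, hd, hr, hC]; field_simp; ring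
    have hexp : Real.exp (-a*y^2 + (r*d+η)*y + (d^2-η^2)/2) * Real.exp (-((v+1)^2)/2)
        = Real.exp (-(w^2)/2) := by
      rw [← Real.exp_add]
      congr 1
      rw [hveq, hw, ha]
      ring
    have h6 : B * Real.exp (-a*y^2 + (r*d+η)*y + (d^2-η^2)/2) < A := hylt
    have h7 := mul_lt_mul_of_pos_right h6
      (show 0 < (Real.sqrt (2 * Real.pi))⁻¹ * Real.exp (-((v+1)^2)/2) by positivity)
    unfold normalPdf
    calc B * ((Real.sqrt (2 * Real.pi))⁻¹ * Real.exp (-(w ^ 2) / 2))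
        = B * Real.exp (-a*y^2 + (r*d+η)*y + (d^2-η^2)/2)
          * ((Real.sqrt (2 * Real.pi))⁻¹ * Real.exp (-((v+1)^2)/2)) := by
          rw [show B * Real.exp (-a*y^2 + (r*d+η)*y + (d^2-η^2)/2)
              * ((Real.sqrt (2 * Real.pi))⁻¹ * Real.exp (-((v+1)^2)/2))
              = B * (Real.sqrt (2 * Real.pi))⁻¹
              * (Real.exp (-a*y^2 + (r*d+η)*y + (d^2-η^2)/2) * Real.exp (-((v+1)^2)/2)) by ring,
            hexp]
          ring
      _ < A * ((Real.sqrt (2 * Real.pi))⁻¹ * Real.exp (-((v + 1) ^ 2) / 2)) := h7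
  linarith [t1, t2, t3, h4]

lemma cb_shift (y z σ : ℝ) : cb (y - z) σ = (-y + z) + cb (-y + z) σ := by
  have h := cb_neg (-y + z) σ
  rw [show -(-y + z) = y - z by ring] at h
  exact h

theorem key2 {Ω : Type*} [MeasurableSpace Ω] (μ : Measure Ω)
    [IsProbabilityMeasure μ] (G : Ω → ℝ) (η : ℝ) (hη : η ≠ 0)
    (hGm : Measurable G)
    (hpos : ∀ᵐ ω ∂μ, 0 < G ω) (hG : Integrable G μ)
    (hmean : ∫ ω, G ω ∂μ = 1)
    (hnondeg : ¬ (∀ᵐ ω ∂μ, G ω = 1))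
    (hint : ∀ y : ℝ, Integrable (fun ω => cb (y + η * (G ω - 1)) (Real.sqrt (G ω))) μ)
    (hsym : ∀ y : ℝ, (∫ ω, cb (y - η * (G ω - 1)) (Real.sqrt (G ω)) ∂μ)
      = ∫ ω, cb (y + η * (G ω - 1)) (Real.sqrt (G ω)) ∂μ) : False := by
  have hZ : ∀ b : ℝ, Integrable (fun ω => b + η * (G ω - 1)) μ :=
    fun b => (integrable_const b).add ((hG.sub (integrable_const 1)).const_mul η)
  have hintm : ∀ y : ℝ, Integrable (fun ω => cb (y - η * (G ω - 1)) (Real.sqrt (G ω))) μ := by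
    intro y
    apply ((hint (-y)).add (hZ (-y))).congr
    apply ae_of_all
    intro ω
    show cb (-y + η * (G ω - 1)) (Real.sqrt (G ω)) + (-y + η * (G ω - 1))
        = cb (y - η * (G ω - 1)) (Real.sqrt (G ω))
    rw [cb_shift y (η * (G ω - 1)) (Real.sqrt (G ω))]
    ring
  rcases hη.lt_or_gt with hneg | hposη
  · -- η < 0 : apply key with -η
    apply key μ G (-η) (by linarith) hGm hpos hG hmean hnondeg
    · intro y
      apply (hintm y).congr
      apply ae_of_all; intro ω
      congr 1; ring
    · intro y
      apply (hint y).congr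
      apply ae_of_all; intro ω
      congr 1; ring
    · intro y
      have h := (hsym y).symm
      calc (∫ ω, cb (y - -η * (G ω - 1)) (Real.sqrt (G ω)) ∂μ)
          = ∫ ω, cb (y + η * (G ω - 1)) (Real.sqrt (G ω)) ∂μ := by
            congr 1; funext ω; congr 1; ring
        _ = ∫ ω, cb (y - η * (G ω - 1)) (Real.sqrt (G ω)) ∂μ := h
        _ = ∫ ω, cb (y + -η * (G ω - 1)) (Real.sqrt (G ω)) ∂μ := by
            congr 1; funext ω; congr 1; ring
  · exact key μ G η hposη hGm hpos hG hmean hnondeg hint hintm hsym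

theorem implied_vol_even_iff_eta_zero {Ω : Type*} [MeasurableSpace Ω] (μ : Measure Ω)
    [IsProbabilityMeasure μ] (G : Ω → ℝ) (η : ℝ)
    (hpos : ∀ᵐ ω ∂μ, 0 < G ω) (hG : Integrable G μ)
    (hmean : ∫ ω, G ω ∂μ = 1)
    (hnondeg : ¬ (∀ᵐ ω ∂μ, G ω = 1))
    (hint : ∀ y : ℝ,
      Integrable (fun ω => cb (y + η * (G ω - 1)) (Real.sqrt (G ω))) μ)
    (I : ℝ → ℝ)
    (hIpos : ∀ y, 0 < I y)
    (hIeq : ∀ y,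
      cb y (I y) = ∫ ω, cb (y + η * (G ω - 1)) (Real.sqrt (G ω)) ∂μ) :
    (η = 0 → ∀ y, I (-y) = I y) ∧ ((∀ y, I (-y) = I y) → η = 0) := by
  have hconst : ∀ c : ℝ, ∫ _ω, c ∂μ = c := by
    intro c; rw [integral_const]; simp
  constructor
  · -- η = 0 → I even
    rintro rfl y
    have hbase : ∀ z : ℝ, cb z (I z) = ∫ ω, cb z (Real.sqrt (G ω)) ∂μ := by
      intro z
      have := hIeq z
      simpa using this
    have hcint : Integrable (fun ω => cb y (Real.sqrt (G ω))) μ := by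
      have := hint y
      simpa using this
    have h1 : cb (-y) (I (-y)) = ∫ ω, cb (-y) (Real.sqrt (G ω)) ∂μ := hbase (-y)
    have h2 : ∫ ω, cb (-y) (Real.sqrt (G ω)) ∂μ = y + ∫ ω, cb y (Real.sqrt (G ω)) ∂μ := by
      have e : (fun ω => cb (-y) (Real.sqrt (G ω)))
          = fun ω => y + cb y (Real.sqrt (G ω)) := funext fun ω => cb_neg y _
      rw [e, integral_add (integrable_const y) hcint, hconst]
    have h3 : cb (-y) (I (-y)) = cb (-y) (I y) := by
      rw [h1, h2, ← hbase y, ← cb_neg]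
    exact (cb_strictMonoOn (-y)).injOn (hIpos (-y)) (hIpos y) h3
  · -- I even → η = 0
    intro hEven
    by_contra hη0
    -- measurable version of G
    set G' : Ω → ℝ := (hG.1.mk G) with hG'def
    have hG'meas : Measurable G' := hG.1.stronglyMeasurable_mk.measurable
    have hGG' : G =ᵐ[μ] G' := hG.1.ae_eq_mk
    have hpos' : ∀ᵐ ω ∂μ, 0 < G' ω := by
      filter_upwards [hpos, hGG'] with ω h1 h2
      rwa [← h2]
    have hG'int : Integrable G' μ := hG.congr hGG'
    have hmean' : ∫ ω, G' ω ∂μ = 1 := by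
      rw [← integral_congr_ae hGG', hmean]
    have hnondeg' : ¬ (∀ᵐ ω ∂μ, G' ω = 1) := by
      intro h
      apply hnondeg
      filter_upwards [h, hGG'] with ω h1 h2
      rw [h2, h1]
    have hint' : ∀ y : ℝ,
        Integrable (fun ω => cb (y + η * (G' ω - 1)) (Real.sqrt (G' ω))) μ := by
      intro y
      apply (hint y).congr
      filter_upwards [hGG'] with ω h
      rw [h]
    have hIeq' : ∀ y,
        cb y (I y) = ∫ ω, cb (y + η * (G' ω - 1)) (Real.sqrt (G' ω)) ∂μ := by
      intro y
      rw [hIeq y]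
      apply integral_congr_ae
      filter_upwards [hGG'] with ω h
      rw [h]
    -- derive the symmetry of integrals
    have hηZ : Integrable (fun ω => η * (G' ω - 1)) μ := by
      have h := (hG'int.sub (integrable_const 1)).const_mul η
      apply h.congr
      apply ae_of_all
      intro ω
      simp [Pi.sub_apply]
    have hZint : ∀ b : ℝ, Integrable (fun ω => b + η * (G' ω - 1)) μ :=
      fun b => (integrable_const b).add hηZ
    have hintm : ∀ y : ℝ,
        Integrable (fun ω => cb (y - η * (G' ω - 1)) (Real.sqrt (G' ω))) μ := by
      intro y
      apply ((hint' (-y)).add (hZint (-y))).congr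
      apply ae_of_all
      intro ω
      show cb (-y + η * (G' ω - 1)) (Real.sqrt (G' ω)) + (-y + η * (G' ω - 1))
          = cb (y - η * (G' ω - 1)) (Real.sqrt (G' ω))
      rw [cb_shift y (η * (G' ω - 1)) (Real.sqrt (G' ω))]
      ring
    have hZmean : ∀ b : ℝ, ∫ ω, (b + η * (G' ω - 1)) ∂μ = b := by
      intro b
      rw [integral_add (integrable_const b) hηZ, hconst, integral_const_mul,
        integral_sub hG'int (integrable_const 1), hmean', hconst]
      ring
    have hsym : ∀ y : ℝ, (∫ ω, cb (y - η * (G' ω - 1)) (Real.sqrt (G' ω)) ∂μ)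
        = ∫ ω, cb (y + η * (G' ω - 1)) (Real.sqrt (G' ω)) ∂μ := by
      intro y
      -- LHS : ∫ cb(y-ηZ) = ∫ cb(-y+ηZ) - ∫(-y+ηZ) = cb(-y, I(-y)) + y
      have e1 : ∫ ω, cb (-y + η * (G' ω - 1)) (Real.sqrt (G' ω)) ∂μ
          = (∫ ω, cb (y - η * (G' ω - 1)) (Real.sqrt (G' ω)) ∂μ) + y := by
        have e : (fun ω => cb (-y + η * (G' ω - 1)) (Real.sqrt (G' ω)))
            = fun ω => cb (y - η * (G' ω - 1)) (Real.sqrt (G' ω))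
              - (-y + η * (G' ω - 1)) := by
          funext ω
          rw [cb_shift y (η * (G' ω - 1)) (Real.sqrt (G' ω))]
          ring
        rw [e, integral_sub (hintm y) (hZint (-y)), hZmean (-y)]
        ring
      have e2 := hIeq' (-y)
      have e3 : cb (-y) (I y) = y + cb y (I y) := cb_neg y (I y)
      rw [hEven y] at e2
      rw [e3, hIeq' y, e1] at e2
      linarith
    exact key2 μ G' η hη0 hG'meas hpos' hG'int hmean' hnondeg' hint' hsym
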